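/- For any trajectory of the simple counter of dimension N started at time 0 (so that mode(0) = switch), the state at time N satisfies α(s(N)) = α(s(0)) + 1 modulo 2^N. -/

import Mathlib

/-- The two modes of the counter. -/
inductive Mode : Type
  | rotate : Mode
  | switch : Mode
deriving DecidableEq

/-- After `N` steps of the simple counter of dimension `N` (started at time `0`,
so that `mode 0 = switch`), the encoded number `α(s) = Σ_i s_i 2^(i-1)` has
increased by `1` modulo `2^N`.  Coordinates are `0`-indexed: coordinate `i`
corresponds to `s_{i+1}` of the paper. -/
theorem stmt1 (N : ℕ) (hN : 0 < N)
    (s : ℕ → Fin N → Bool) (mode : ℕ → Mode)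
    -- s_i(t) = s_{i+1}(t-1) for i = 1, ..., N-1
    (hshift : ∀ (t : ℕ) (i : Fin N) (h : (i : ℕ) + 1 < N),
      s (t + 1) i = s t ⟨(i : ℕ) + 1, h⟩)
    -- s_N(t) = γ(s_1(t-1), mode(t-1)), where γ(x, rotate) = x, γ(x, switch) = ¬x
    (hlast : ∀ t : ℕ, s (t + 1) ⟨N - 1, Nat.sub_lt hN one_pos⟩ =
      (if mode t = Mode.switch then !(s t ⟨0, hN⟩) else s t ⟨0, hN⟩))
    -- mode(t) = switch whenever t is a multiple of N
    (hmodeN : ∀ t : ℕ, N ∣ t → mode t = Mode.switch)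
    -- otherwise mode(t) = mode(t-1) if s_1(t-1) = 1, and mode(t) = rotate if s_1(t-1) = 0
    (hmode : ∀ t : ℕ, ¬ N ∣ (t + 1) →
      mode (t + 1) = (if s t ⟨0, hN⟩ = true then mode t else Mode.rotate)) :
    (∑ i : Fin N, (s N i).toNat * 2 ^ (i : ℕ)) % 2 ^ N
      = ((∑ i : Fin N, (s 0 i).toNat * 2 ^ (i : ℕ)) + 1) % 2 ^ N := by
  -- shift lemma
  have hA : ∀ d t (i : ℕ) (hi : i < N) (h : i + d < N),
      s (t + d) ⟨i, hi⟩ = s t ⟨i + d, h⟩ := by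
    intro d
    induction d with
    | zero => intro t i hi h; simp
    | succ d ih =>
      intro t i hi h
      have h1 : i + 1 < N := by omega
      have : s (t + 1 + d) ⟨i, hi⟩ = s (t + 1) ⟨i + d, by omega⟩ := ih (t+1) i hi (by omega)
      have h2 : s (t + 1) ⟨i + d, by omega⟩ = s t ⟨i + d + 1, by omega⟩ :=
        hshift t ⟨i + d, by omega⟩ (by omega)
      have harr : t + (d + 1) = t + 1 + d := by omega
      rw [harr, this, h2]
      rfl
  -- mode lemma: for t < N
  have hm : ∀ t, t < N → mode t =
      (if ∀ j (hj : j < N), j < t → s 0 ⟨j, hj⟩ = true then Mode.switch else Mode.rotate) := by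
    intro t
    induction t with
    | zero =>
      intro _
      rw [hmodeN 0 (dvd_zero N)]
      rw [if_pos]; intro j hj hj0; omega
    | succ t ih =>
      intro ht
      have hndvd : ¬ N ∣ (t + 1) := by
        intro hd
        rcases hd with ⟨c, hc⟩
        rcases c with _ | c
        · omega
        · simp [Nat.mul_succ] at hc; omega
      have htN : t < N := by omega
      rw [hmode t hndvd, ih htN]
      have h0 : s t ⟨0, hN⟩ = s 0 ⟨t, htN⟩ := by
        have := hA t 0 0 hN (by omega)
        simpa using this
      rw [h0]
      by_cases hb : s 0 ⟨t, htN⟩ = true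
      · rw [if_pos hb]
        by_cases hall : ∀ j (hj : j < N), j < t → s 0 ⟨j, hj⟩ = true
        · rw [if_pos hall, if_pos]
          intro j hj hjt
          rcases Nat.lt_or_ge j t with h | h
          · exact hall j hj h
          · have : j = t := by omega
            subst this; exact hb
        · rw [if_neg hall, if_neg]
          intro hall'
          exact hall fun j hj hjt => hall' j hj (by omega)
      · rw [if_neg hb, if_neg]
        intro hall'
        exact hb (hall' t htN (by omega))
  -- value of s N
  have hSN : ∀ (i : ℕ) (hi : i < N), s N ⟨i, hi⟩ =
      (if ∀ j (hj : j < N), j < i → s 0 ⟨j, hj⟩ = true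
        then !(s 0 ⟨i, hi⟩) else s 0 ⟨i, hi⟩) := by
    intro i hi
    have h1 : s N ⟨i, hi⟩ = s (i + 1) ⟨N - 1, Nat.sub_lt hN one_pos⟩ := by
      have := hA (N - 1 - i) (i + 1) i hi (by omega)
      have harr : i + 1 + (N - 1 - i) = N := by omega
      rw [harr] at this
      have heq : (⟨i + (N - 1 - i), by omega⟩ : Fin N) = ⟨N - 1, Nat.sub_lt hN one_pos⟩ :=
        Fin.mk_eq_mk.mpr (by omega)
      rw [this, heq]
    rw [h1, hlast i, hm i hi]
    have h0 : s i ⟨0, hN⟩ = s 0 ⟨i, hi⟩ := by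
      have := hA i 0 0 hN (by omega)
      simpa using this
    rw [h0]
    by_cases hall : ∀ j (hj : j < N), j < i → s 0 ⟨j, hj⟩ = true
    · rw [if_pos hall, if_pos hall, if_pos rfl]
    · rw [if_neg hall, if_neg hall, if_neg (by simp)]
  -- sums via functions on ℕ
  set F : ℕ → ℕ := fun n => if h : n < N then (s N ⟨n, h⟩).toNat * 2 ^ n else 0 with hF
  set G : ℕ → ℕ := fun n => if h : n < N then (s 0 ⟨n, h⟩).toNat * 2 ^ n else 0 with hG
  have hFsum : (∑ i : Fin N, (s N i).toNat * 2 ^ (i : ℕ)) = ∑ i ∈ Finset.range N, F i := by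
    rw [← Fin.sum_univ_eq_sum_range]
    apply Finset.sum_congr rfl
    intro i _
    simp [hF, i.isLt]
  have hGsum : (∑ i : Fin N, (s 0 i).toNat * 2 ^ (i : ℕ)) = ∑ i ∈ Finset.range N, G i := by
    rw [← Fin.sum_univ_eq_sum_range]
    apply Finset.sum_congr rfl
    intro i _
    simp [hG, i.isLt]
  rw [hFsum, hGsum]
  have geom : ∀ n, (∑ i ∈ Finset.range n, 2 ^ i) = 2 ^ n - 1 := by
    intro n
    induction n with
    | zero => simp
    | succ n ih =>
      rw [Finset.sum_range_succ, ih]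
      have : 0 < 2 ^ n := Nat.pow_pos (n := n) (by norm_num)
      rw [pow_succ]
      omega
  by_cases hall : ∀ j (hj : j < N), s 0 ⟨j, hj⟩ = true
  · -- all bits one
    have hFz : ∀ i ∈ Finset.range N, F i = 0 := by
      intro i hi
      have hiN : i < N := Finset.mem_range.mp hi
      simp only [hF, dif_pos hiN]
      rw [hSN i hiN, if_pos (fun j hj _ => hall j hj), hall i hiN]
      simp
    have hGo : ∀ i ∈ Finset.range N, G i = 2 ^ i := by
      intro i hi
      have hiN : i < N := Finset.mem_range.mp hi
      simp only [hG, dif_pos hiN]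
      rw [hall i hiN]
      simp
    rw [Finset.sum_eq_zero hFz, Finset.sum_congr rfl hGo, geom]
    have : 0 < 2 ^ N := Nat.pow_pos (n := N) (by norm_num)
    have h2 : 2 ^ N - 1 + 1 = 2 ^ N := by omega
    rw [Nat.zero_mod, h2, Nat.mod_self]
  · -- there is a least zero bit k
    push_neg at hall
    have hex : ∃ n, ∃ h : n < N, s 0 ⟨n, h⟩ = false := by
      rcases hall with ⟨j, hj, hjf⟩
      exact ⟨j, hj, by simpa using hjf⟩
    classical
    let k := Nat.find hex
    obtain ⟨hkN, hk0⟩ := Nat.find_spec hex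
    have hklt : ∀ j (hj : j < N), j < k → s 0 ⟨j, hj⟩ = true := by
      intro j hj hjk
      have := Nat.find_min hex hjk
      push_neg at this
      have := this hj
      simpa using this
    -- values of s N
    have hSNlt : ∀ (i : ℕ) (hi : i < N), i < k → s N ⟨i, hi⟩ = false := by
      intro i hi hik
      rw [hSN i hi, if_pos (fun j hj hji => hklt j hj (by omega)), hklt i hi hik]
      simp
    have hSNk : s N ⟨k, hkN⟩ = true := by
      rw [hSN k hkN, if_pos (fun j hj hji => hklt j hj hji), hk0]
      simp
    have hSNgt : ∀ (i : ℕ) (hi : i < N), k < i → s N ⟨i, hi⟩ = s 0 ⟨i, hi⟩ := by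
      intro i hi hik
      rw [hSN i hi, if_neg]
      intro hall'
      have := hall' k hkN hik
      rw [hk0] at this
      exact absurd this (by simp)
    -- split sums at k
    have splitF : ∑ i ∈ Finset.range N, F i =
        (∑ i ∈ Finset.range k, F i) + F k + ∑ i ∈ Finset.Ico (k+1) N, F i := by
      rw [Finset.range_eq_Ico, ← Finset.sum_Ico_consecutive _ (Nat.zero_le (k+1)) (by omega : k + 1 ≤ N),
        ← Finset.range_eq_Ico, Finset.sum_range_succ]
    have splitG : ∑ i ∈ Finset.range N, G i =
        (∑ i ∈ Finset.range k, G i) + G k + ∑ i ∈ Finset.Ico (k+1) N, G i := by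
      rw [Finset.range_eq_Ico, ← Finset.sum_Ico_consecutive _ (Nat.zero_le (k+1)) (by omega : k + 1 ≤ N),
        ← Finset.range_eq_Ico, Finset.sum_range_succ]
    have hFlow : ∑ i ∈ Finset.range k, F i = 0 := by
      apply Finset.sum_eq_zero
      intro i hi
      have hik : i < k := Finset.mem_range.mp hi
      have hiN : i < N := by omega
      simp only [hF, dif_pos hiN]
      rw [hSNlt i hiN hik]
      simp
    have hGlow : ∑ i ∈ Finset.range k, G i = 2 ^ k - 1 := by
      rw [← geom k]
      apply Finset.sum_congr rfl
      intro i hi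
      have hik : i < k := Finset.mem_range.mp hi
      have hiN : i < N := by omega
      simp only [hG, dif_pos hiN]
      rw [hklt i hiN hik]
      simp
    have hFk : F k = 2 ^ k := by
      simp only [hF, dif_pos (show k < N from hkN)]
      rw [hSNk]; simp
    have hGk : G k = 0 := by
      simp only [hG, dif_pos (show k < N from hkN)]
      rw [show s 0 ⟨k, hkN⟩ = false from hk0]; simp
    have hhigh : ∑ i ∈ Finset.Ico (k+1) N, F i = ∑ i ∈ Finset.Ico (k+1) N, G i := by
      apply Finset.sum_congr rfl
      intro i hi
      have hmem := Finset.mem_Ico.mp hi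
      have hiN : i < N := hmem.2
      simp only [hF, hG, dif_pos hiN]
      rw [hSNgt i hiN (by omega)]
    have hpos : 0 < 2 ^ k := Nat.pow_pos (n := k) (by norm_num)
    rw [splitF, splitG, hFlow, hGlow, hFk, hGk, hhigh]
    congr 1
    omega
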